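/- A traceless algebraic curvature tensor R on an ε-Hermitian vector space satisfying both θ ∧ R_{WU} = 0 and (θ∘J) ∧ R_{WU} = 0 for all W, U (where R_{WU} is the 2-form (X,Y) ↦ R(X,Y,W,U) and θ = ξ♭ with ξ null and θ, θ∘J linearly independent) must be of the form R = k (θ ∧ (θ∘J)) ⊗ (θ ∧ (θ∘J)) for some k ∈ ℝ, provided R additionally satisfies the Kähler symmetry R(JX, JY, Z, W) = -ε R(X, Y, Z, W). -/

import Mathlib

/-- A traceless algebraic curvature tensor `R` on an ε-Hermitian vector
space with the Kähler symmetry `R(JX,JY,Z,W) = -ε R(X,Y,Z,W)`, satisfying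
`θ ∧ R_{WU} = 0` and `(θ∘J) ∧ R_{WU} = 0` for all `W, U` (with `θ = ξ♭`, `ξ` null,
`θ, θ∘J` linearly independent), must be of the form
`R = k (θ ∧ (θ∘J)) ⊗ (θ ∧ (θ∘J))` for some `k ∈ ℝ`. -/
theorem stmt16 (V : Type*) [AddCommGroup V] [Module ℝ V] [FiniteDimensional ℝ V]
    (ε : ℝ) (hε : ε = 1 ∨ ε = -1)
    (g : LinearMap.BilinForm ℝ V)
    (hsymm : ∀ x y : V, g x y = g y x)
    (hnd : ∀ x : V, (∀ y : V, g x y = 0) → x = 0)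
    (J : V →ₗ[ℝ] V) (hJ2 : ∀ x : V, J (J x) = ε • x)
    (hskew : ∀ x y : V, g (J x) y + g x (J y) = 0)
    (ξ : V) (hnull : g ξ ξ = 0)
    (hLI : ∀ a b : ℝ, (∀ x : V, a * g ξ x + b * g ξ (J x) = 0) → a = 0 ∧ b = 0)
    (R : V →ₗ[ℝ] V →ₗ[ℝ] V →ₗ[ℝ] V →ₗ[ℝ] ℝ)
    (hanti1 : ∀ X Y Z W : V, R X Y Z W = -R Y X Z W)
    (hanti2 : ∀ X Y Z W : V, R X Y Z W = -R X Y W Z)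
    (hpair : ∀ X Y Z W : V, R X Y Z W = R Z W X Y)
    (hbianchi : ∀ X Y Z W : V, R X Y Z W + R Y Z X W + R Z X Y W = 0)
    (hkahler : ∀ X Y Z W : V, R (J X) (J Y) Z W = -ε * R X Y Z W)
    (m : ℕ) (e : Module.Basis (Fin m) ℝ V) (s : Fin m → ℝ)
    (hs : ∀ i, s i = 1 ∨ s i = -1)
    (horth : ∀ i j, g (e i) (e j) = if i = j then s i else 0)
    (htraceless : ∀ Y W : V, ∑ i, s i * R (e i) Y (e i) W = 0)
    (hwedgeθ : ∀ W U X Y Z : V,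
      g ξ X * R Y Z W U - g ξ Y * R X Z W U + g ξ Z * R X Y W U = 0)
    (hwedgeθJ : ∀ W U X Y Z : V,
      g ξ (J X) * R Y Z W U - g ξ (J Y) * R X Z W U + g ξ (J Z) * R X Y W U = 0) :
    ∃ k : ℝ, ∀ X Y Z W : V,
      R X Y Z W = k * (g ξ X * g ξ (J Y) - g ξ Y * g ξ (J X))
        * (g ξ Z * g ξ (J W) - g ξ W * g ξ (J Z)) := by

  classical
  -- find x with θ x ≠ 0
  obtain ⟨x, hx⟩ : ∃ x : V, g ξ x ≠ 0 := by
    by_contra h; push_neg at h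
    exact one_ne_zero (hLI 1 0 (fun z => by simp [h z])).1
  -- find y with determinant D ≠ 0
  obtain ⟨y, hy⟩ : ∃ y : V, g ξ x * g ξ (J y) - g ξ y * g ξ (J x) ≠ 0 := by
    by_contra h; push_neg at h
    have h2 := hLI (g ξ (J x)) (-(g ξ x)) (fun z => by have := h z; ring_nf at this ⊢; linarith)
    have : -(g ξ x) = 0 := h2.2
    exact hx (by linarith)
  set D : ℝ := g ξ x * g ξ (J y) - g ξ y * g ξ (J x) with hD
  set u : V := D⁻¹ • (g ξ (J y) • x - g ξ (J x) • y) with hu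
  set v : V := D⁻¹ • (g ξ x • y - g ξ y • x) with hv
  have hθu : g ξ u = 1 := by
    simp only [hu, map_smul, map_sub, smul_eq_mul]
    field_simp [hD]
    try ring
  have hφu : g ξ (J u) = 0 := by
    simp only [hu, map_smul, map_sub, smul_eq_mul]
    ring
  have hθv : g ξ v = 0 := by
    simp only [hv, map_smul, map_sub, smul_eq_mul]
    ring
  have hφv : g ξ (J v) = 1 := by
    simp only [hv, map_smul, map_sub, smul_eq_mul]
    field_simp [hD]
    try ring
  -- step (A): expansion in terms of u
  have hA : ∀ W U Y Z : V, R Y Z W U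
      = g ξ Y * R u Z W U - g ξ Z * R u Y W U := by
    intro W U Y Z
    have := hwedgeθ W U u Y Z
    rw [hθu] at this
    linarith
  have hvZ : ∀ W U Z : V, R v Z W U = -(g ξ Z) * R u v W U := by
    intro W U Z
    have h1 := hA W U v Z
    rw [hθv] at h1
    have h2 : R u Z W U = -R Z u W U := hanti1 u Z W U
    have h3 := hanti1 u v W U
    linarith [h1]
  have key : ∀ Y Z W U : V, R Y Z W U
      = R u v W U * (g ξ Y * g ξ (J Z) - g ξ Z * g ξ (J Y)) := by
    intro Y Z W U
    have hB := hwedgeθJ W U v Y Z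
    rw [hφv] at hB
    have h1 := hvZ W U Z
    have h2 := hvZ W U Y
    have hB2 : R Y Z W U = g ξ (J Y) * R v Z W U - g ξ (J Z) * R v Y W U := by
      linarith
    rw [hB2, h1, h2]
    ring
  refine ⟨R u v u v, fun X Y Z W => ?_⟩
  have h1 := key X Y Z W
  have h2 : R u v Z W = R Z W u v := hpair u v Z W
  have h3 := key Z W u v
  rw [h1, h2, h3]
  ring
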